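/- Let M be a compact, second countable, zero-dimensional space. Then for every continuous function f : M → T there exists a continuous function g : M → ℝ with |g(x)| < 2/3 for all x ∈ M such that f(x) = exp(2πi·g(x)) for all x ∈ M. In particular, the exponential homomorphism C(M,ℝ) → C(M,T), g ↦ exp(2πi·g), is surjective. -/

import Mathlib

noncomputable section

open Complex Real

private lemma re_gt_half {w : ℂ} (hw : ‖w‖ = 1) (hd : ‖w - 1‖ < 1) : 1/2 < w.re := by
  have h1 : Complex.normSq (w - 1) < 1 := by
    have h : ‖w - 1‖^2 < 1 := by nlinarith [norm_nonneg (w-1)]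
    rwa [Complex.normSq_eq_norm_sq]
  have h2 : Complex.normSq w = 1 := by
    rw [Complex.normSq_eq_norm_sq, hw]; norm_num
  simp only [Complex.normSq_apply, Complex.sub_re, Complex.sub_im, Complex.one_re,
    Complex.one_im] at h1 h2 ⊢
  nlinarith

private lemma abs_arg_lt {w : ℂ} (hw : ‖w‖ = 1) (hre : 1/2 < w.re) : |w.arg| < π/3 := by
  by_contra h
  push_neg at h
  have hw0 : w ≠ 0 := by intro h0; rw [h0] at hw; simp at hw
  have hc : Real.cos |w.arg| ≤ Real.cos (π/3) :=
    Real.cos_le_cos_of_nonneg_of_le_pi (by positivity) (Complex.abs_arg_le_pi w) h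
  rw [Real.cos_abs, Real.cos_pi_div_three] at hc
  have : Real.cos w.arg = w.re := by
    rw [Complex.cos_arg hw0, hw, div_one]
  linarith

private lemma exp_arg_eq {w : ℂ} (hw : ‖w‖ = 1) : Complex.exp (w.arg * Complex.I) = w := by
  have := Complex.norm_mul_exp_arg_mul_I w
  rw [show ((‖w‖ : ℝ) : ℂ) = 1 by rw [hw]; norm_num] at this
  simpa using this

open Classical in
/-- glue a list of pieces -/
def glueList {M : Type*} : List (Set M × (M → ℝ)) → M → ℝ
  | [] => fun _ => 0
  | p :: rest => fun y => if y ∈ p.1 then p.2 y else glueList rest y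

lemma glueList_cont {M : Type*} [TopologicalSpace M] (L : List (Set M × (M → ℝ)))
    (h : ∀ p ∈ L, IsClopen p.1 ∧ ∀ y ∈ p.1, ContinuousAt p.2 y) :
    Continuous (glueList L) := by
  induction L with
  | nil => exact continuous_const
  | cons p rest ih =>
    obtain ⟨hcl, hct⟩ := h p List.mem_cons_self
    have hrest := ih (fun q hq => h q (List.mem_cons_of_mem _ hq))
    rw [continuous_iff_continuousAt]
    intro y
    by_cases hy : y ∈ p.1
    · refine (hct y hy).congr ?_
      filter_upwards [hcl.2.mem_nhds hy] with z hz
      simp [glueList, hz]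
    · refine (hrest.continuousAt).congr ?_
      filter_upwards [hcl.compl.2.mem_nhds hy] with z hz
      rw [Set.mem_compl_iff] at hz
      simp [glueList, hz]

lemma glueList_spec {M : Type*} (L : List (Set M × (M → ℝ))) (y : M)
    (hy : ∃ p ∈ L, y ∈ p.1) : ∃ p ∈ L, y ∈ p.1 ∧ glueList L y = p.2 y := by
  induction L with
  | nil => simp at hy
  | cons p rest ih =>
    by_cases h : y ∈ p.1
    · exact ⟨p, List.mem_cons_self, h, by simp [glueList, h]⟩
    · obtain ⟨q, hq, hyq⟩ := hy
      rcases List.mem_cons.mp hq with rfl | hq'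
      · exact absurd hyq h
      · obtain ⟨q', hq', hyq', he⟩ := ih ⟨q, hq', hyq⟩
        exact ⟨q', List.mem_cons_of_mem _ hq', hyq', by simp [glueList, h, he]⟩

/-- The exponential homomorphism `C(M, ℝ) → C(M, 𝕋)`, `g ↦ exp(2πi·g)`. -/
def cExp {M : Type*} [TopologicalSpace M] (g : C(M, ℝ)) : C(M, Circle) :=
  ⟨fun x => Circle.exp (2 * Real.pi * g x), by continuity⟩

/-- For a compact, second countable, zero-dimensional space `M`, every continuous function
`f : M → 𝕋` has a continuous logarithm `g : M → ℝ` bounded by `2/3`; in particular, the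
exponential homomorphism `C(M, ℝ) → C(M, 𝕋)` is surjective. -/
theorem statement14
    {M : Type*} [TopologicalSpace M] [CompactSpace M] [T2Space M] [SecondCountableTopology M]
    -- `M` is zero-dimensional: the clopen sets form a topological basis
    (hzerodim : TopologicalSpace.IsTopologicalBasis { s : Set M | IsClopen s }) :
    (∀ f : C(M, Circle), ∃ g : C(M, ℝ),
        (∀ x : M, |g x| < 2 / 3) ∧ ∀ x : M, f x = Circle.exp (2 * Real.pi * g x)) ∧
      Function.Surjective (cExp (M := M)) := by
  have main : ∀ f : C(M, Circle), ∃ g : C(M, ℝ),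
      (∀ x : M, |g x| < 2 / 3) ∧ ∀ x : M, f x = Circle.exp (2 * Real.pi * g x) := by
    intro f
    -- the open set where f is close to f x
    set U : M → Set M := fun x => {y | ‖(f y : ℂ) - (f x : ℂ)‖ < 1} with hU
    have hUopen : ∀ x, IsOpen (U x) := by
      intro x
      have : Continuous fun y => ‖(f y : ℂ) - (f x : ℂ)‖ := by continuity
      exact isOpen_lt this continuous_const
    have hUx : ∀ x, x ∈ U x := by intro x; simp [hU]
    -- clopen neighborhoods inside U x
    have hV : ∀ x : M, ∃ V : Set M, IsClopen V ∧ x ∈ V ∧ V ⊆ U x := by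
      intro x
      obtain ⟨V, hVcl, hxV, hVsub⟩ :=
        hzerodim.exists_subset_of_mem_open (hUx x) (hUopen x)
      exact ⟨V, hVcl, hxV, hVsub⟩
    choose V hVcl hVx hVsub using hV
    -- finite subcover
    have hcover : Set.univ ⊆ ⋃ x, V x := fun y _ => Set.mem_iUnion.mpr ⟨y, hVx y⟩
    obtain ⟨t, ht⟩ := isCompact_univ.elim_finite_subcover V (fun x => (hVcl x).2) hcover
    -- local logarithms
    set gl : M → M → ℝ := fun x y =>
      (Complex.arg ((f y : ℂ) / (f x : ℂ)) + Complex.arg (f x : ℂ)) / (2 * π) with hgl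
    -- basic facts for y ∈ U x
    have hratio : ∀ x y, y ∈ U x → ‖((f y : ℂ) / (f x : ℂ))‖ = 1 ∧
        1/2 < ((f y : ℂ) / (f x : ℂ)).re := by
      intro x y hy
      have hfx : ‖(f x : ℂ)‖ = 1 := norm_eq_of_mem_sphere _
      have hfy : ‖(f y : ℂ)‖ = 1 := norm_eq_of_mem_sphere _
      have hnorm : ‖((f y : ℂ) / (f x : ℂ))‖ = 1 := by
        rw [norm_div, hfx, hfy]; norm_num
      refine ⟨hnorm, re_gt_half hnorm ?_⟩
      have : (f y : ℂ) / (f x : ℂ) - 1 = ((f y : ℂ) - (f x : ℂ)) / (f x : ℂ) := by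
        field_simp
      rw [this, norm_div, hfx, div_one]
      exact hy
    -- continuity of local logs on U x
    have hglcont : ∀ x, ∀ y ∈ U x, ContinuousAt (gl x) y := by
      intro x y hy
      have hre := (hratio x y hy).2
      have harg : ContinuousAt Complex.arg ((f y : ℂ) / (f x : ℂ)) :=
        Complex.continuousAt_arg (by left; linarith)
      have hc : ContinuousAt (fun z : M => (f z : ℂ) / (f x : ℂ)) y := by
        exact ((continuous_subtype_val.comp f.continuous).div_const _).continuousAt
      exact ((harg.comp (x := y) hc).add continuousAt_const).div_const _
    -- construct g
    set L : List (Set M × (M → ℝ)) := t.toList.map (fun x => (V x, gl x)) with hL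
    have hLprop : ∀ p ∈ L, IsClopen p.1 ∧ ∀ y ∈ p.1, ContinuousAt p.2 y := by
      intro p hp
      obtain ⟨x, _, rfl⟩ := List.mem_map.mp hp
      exact ⟨hVcl x, fun y hy => hglcont x y (hVsub x hy)⟩
    set g : C(M, ℝ) := ⟨glueList L, glueList_cont L hLprop⟩ with hg
    refine ⟨g, ?_, ?_⟩
    all_goals
      intro y
      obtain ⟨p, hp, hyp, heq⟩ := glueList_spec L y (by
        obtain ⟨x, hx⟩ := Set.mem_iUnion.mp (ht (Set.mem_univ y))
        simp only [Set.mem_iUnion] at hx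
        obtain ⟨hxt, hyV⟩ := hx
        exact ⟨(V x, gl x), List.mem_map.mpr ⟨x, Finset.mem_toList.mpr hxt, rfl⟩, hyV⟩)
      obtain ⟨x, _, rfl⟩ := List.mem_map.mp hp
      have hyU : y ∈ U x := hVsub x hyp
      obtain ⟨hnorm, hre⟩ := hratio x y hyU
      have hargsmall : |Complex.arg ((f y : ℂ) / (f x : ℂ))| < π/3 := abs_arg_lt hnorm hre
      have hargpi : |Complex.arg (f x : ℂ)| ≤ π := Complex.abs_arg_le_pi _
      have hgval : g y = gl x y := heq
    · -- bound
      rw [hgval, hgl]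
      rw [abs_div]
      have hpi : (0:ℝ) < 2 * π := by positivity
      rw [abs_of_pos hpi, div_lt_iff₀ hpi]
      calc |Complex.arg ((f y : ℂ) / (f x : ℂ)) + Complex.arg (f x : ℂ)|
          ≤ |Complex.arg ((f y : ℂ) / (f x : ℂ))| + |Complex.arg (f x : ℂ)| := abs_add_le _ _
        _ < π/3 + π := by linarith
        _ = 2/3 * (2 * π) := by ring
    · -- exponential identity
      rw [hgval]
      apply Circle.ext
      rw [Circle.coe_exp]
      have h2pi : (2 * π : ℝ) ≠ 0 := by positivity
      have : 2 * π * gl x y = Complex.arg ((f y : ℂ) / (f x : ℂ)) + Complex.arg (f x : ℂ) := by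
        rw [hgl]; field_simp
      rw [this]
      rw [Complex.ofReal_add]
      rw [add_mul, Complex.exp_add, exp_arg_eq hnorm, exp_arg_eq (Circle.norm_coe _)]
      field_simp
  refine ⟨main, ?_⟩
  intro f
  obtain ⟨g, _, hg⟩ := main f
  exact ⟨g, ContinuousMap.ext fun x => (hg x).symm⟩

end
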